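/- W_2 is not a magic monotone under mixed unital Clifford channels: for the single-qubit pure state |ψ⟩ = cos(π/16)|0⟩ + sin(π/16)|1⟩ with ρ = |ψ⟩⟨ψ|, and the channel Γ(ρ) = (1/2)ρ + (1/2) H ρ H where H is the Hadamard gate, one has W_2(Γ(ρ)) > W_2(ρ), i.e. W_2 strictly increases under this mixed unital Clifford channel. -/

import Mathlib

open Matrix Complex BigOperators
open scoped ComplexOrder

noncomputable section

/-- Index type for `n` qubits: functions `Fin n → Fin 2` (cardinality `2^n`). -/
abbrev QIdx (n : ℕ) := Fin n → Fin 2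

/-- The four single-qubit Pauli matrices: `σ⁰ = I`, `σ¹ = σˣ`, `σ² = σᶻ`, `σ³ = σʸ`. -/
def pauliMat : Fin 4 → Matrix (Fin 2) (Fin 2) ℂ
  | 0 => 1
  | 1 => !![0, 1; 1, 0]
  | 2 => !![1, 0; 0, -1]
  | 3 => !![0, -Complex.I; Complex.I, 0]

/-- The Pauli string `σ^{a_1} ⊗ ⋯ ⊗ σ^{a_n}` as a `2^n × 2^n` matrix. -/
def pauliString {n : ℕ} (a : Fin n → Fin 4) : Matrix (QIdx n) (QIdx n) ℂ :=
  fun i j => ∏ k, pauliMat (a k) (i k) (j k)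

/-- An `n`-qubit state: positive semidefinite with unit trace. -/
def IsState {n : ℕ} (ρ : Matrix (QIdx n) (QIdx n) ℂ) : Prop :=
  ρ.PosSemidef ∧ ρ.trace = 1

/-- The `α`-moment of the Pauli spectrum `A_α(ρ) = 2^{-n} ∑_P |tr(ρP)|^{2α}`. -/
def Amom {n : ℕ} (α : ℝ) (ρ : Matrix (QIdx n) (QIdx n) ℂ) : ℝ :=
  ((2:ℝ)^n)⁻¹ * ∑ a : Fin n → Fin 4, ‖(ρ * pauliString a).trace‖ ^ (2 * α)

/-- The 2-Rényi entropy `S₂(ρ) = -ln tr(ρ²)`. -/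
def S2 {n : ℕ} (ρ : Matrix (QIdx n) (QIdx n) ℂ) : ℝ :=
  - Real.log ((ρ * ρ).trace.re)

/-- The magic witness `W_α(ρ) = (1/(1-α)) ln A_α(ρ) - ((1-2α)/(1-α)) S₂(ρ)`. -/
def Wit {n : ℕ} (α : ℝ) (ρ : Matrix (QIdx n) (QIdx n) ℂ) : ℝ :=
  (1 / (1 - α)) * Real.log (Amom α ρ) - ((1 - 2*α)/(1 - α)) * S2 ρ

/-- The stabilizer norm `D(ρ) = A_{1/2}(ρ) = 2^{-n} ∑_P |tr(ρP)|`. -/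
def Dnorm {n : ℕ} (ρ : Matrix (QIdx n) (QIdx n) ℂ) : ℝ :=
  Amom (1/2) ρ

/-- A Clifford unitary: unitary mapping every Pauli string to `±` a Pauli string. -/
def IsCliffordUnitary {n : ℕ} (U : Matrix (QIdx n) (QIdx n) ℂ) : Prop :=
  U ∈ Matrix.unitaryGroup (QIdx n) ℂ ∧
    ∀ a : Fin n → Fin 4, ∃ (b : Fin n → Fin 4) (ε : ℝ),
      (ε = 1 ∨ ε = -1) ∧ U * pauliString a * Uᴴ = (ε : ℂ) • pauliString b

/-- The computational all-zeros basis vector `|0⟩^{⊗n}`. -/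
def zeroVec (n : ℕ) : QIdx n → ℂ :=
  fun i => if (∀ k, i k = 0) then 1 else 0

/-- A pure stabilizer state vector: `U|0⟩^{⊗n}` for a Clifford unitary `U`. -/
def IsPureStab {n : ℕ} (ψ : QIdx n → ℂ) : Prop :=
  ∃ U, IsCliffordUnitary U ∧ ψ = U.mulVec (zeroVec n)

/-- The rank-one projector `|ψ⟩⟨ψ|`. -/
def proj {n : ℕ} (ψ : QIdx n → ℂ) : Matrix (QIdx n) (QIdx n) ℂ :=
  Matrix.vecMulVec ψ (star ψ)

/-- A mixed stabilizer state: a finite convex combination of pure stabilizer projectors. -/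
def IsMixedStab {n : ℕ} (ρ : Matrix (QIdx n) (QIdx n) ℂ) : Prop :=
  ∃ (k : ℕ) (p : Fin k → ℝ) (ψ : Fin k → QIdx n → ℂ),
    (∀ i, 0 ≤ p i) ∧ (∑ i, p i = 1) ∧ (∀ i, IsPureStab (ψ i)) ∧
    ρ = ∑ i, (p i : ℂ) • proj (ψ i)

/-- The set of values `ln ∑ᵢ |xᵢ|` over finite real stabilizer decompositions of `ρ`. -/
def StabDecomps {n : ℕ} (ρ : Matrix (QIdx n) (QIdx n) ℂ) : Set ℝ :=
  { r | ∃ (k : ℕ) (x : Fin k → ℝ) (ψ : Fin k → QIdx n → ℂ),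
      (∀ i, IsPureStab (ψ i)) ∧ ρ = ∑ i, (x i : ℂ) • proj (ψ i) ∧
      r = Real.log (∑ i, |x i|) }

/-- The log-free robustness of magic. -/
def LR {n : ℕ} (ρ : Matrix (QIdx n) (QIdx n) ℂ) : ℝ := sInf (StabDecomps ρ)

open Classical in
/-- Positive-semidefinite square root (junk value `0` off the PSD cone). -/
def psdSqrt {n : ℕ} (A : Matrix (QIdx n) (QIdx n) ℂ) : Matrix (QIdx n) (QIdx n) ℂ :=
  if h : A.PosSemidef then
    h.1.eigenvectorUnitary.1 * diagonal ((↑) ∘ (√·) ∘ h.1.eigenvalues) *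
      (star h.1.eigenvectorUnitary : Matrix (QIdx n) (QIdx n) ℂ)
  else 0

/-- The Uhlmann fidelity `F(ρ,σ) = (tr √(√ρ σ √ρ))²`. -/
def fidelity {n : ℕ} (ρ σ : Matrix (QIdx n) (QIdx n) ℂ) : ℝ :=
  ((psdSqrt (psdSqrt ρ * σ * psdSqrt ρ)).trace.re) ^ 2

/-- The stabilizer fidelity `D_F(ρ) = inf { -ln F(ρ,σ) : σ a mixed stabilizer state }`. -/
def DF {n : ℕ} (ρ : Matrix (QIdx n) (QIdx n) ℂ) : ℝ :=
  sInf { r | ∃ σ, IsMixedStab σ ∧ r = - Real.log (fidelity ρ σ) }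

/-- Filtered Pauli moment `Ã_α(ρ) = (2^n A_α(ρ) - 1)/(2^n - 1)`. -/
def Atil {n : ℕ} (α : ℝ) (ρ : Matrix (QIdx n) (QIdx n) ℂ) : ℝ :=
  ((2:ℝ)^n * Amom α ρ - 1) / ((2:ℝ)^n - 1)

/-- Filtered stabilizer norm `D̃(ρ) = (2^n D(ρ) - 1)/(2^n - 1)`. -/
def Dtil {n : ℕ} (ρ : Matrix (QIdx n) (QIdx n) ℂ) : ℝ :=
  ((2:ℝ)^n * Dnorm ρ - 1) / ((2:ℝ)^n - 1)

/-- Filtered magic witness `W̃_α(ρ) = (1/(1-α)) ln Ã_α(ρ) + ((1-2α)/(1-α)) ln Ã₁(ρ)`. -/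
def Wtil {n : ℕ} (α : ℝ) (ρ : Matrix (QIdx n) (QIdx n) ℂ) : ℝ :=
  (1/(1-α)) * Real.log (Atil α ρ) + ((1 - 2*α)/(1-α)) * Real.log (Atil 1 ρ)

/-- The maximally mixed state `I/2^n`. -/
def maxMixed (n : ℕ) : Matrix (QIdx n) (QIdx n) ℂ := ((2:ℂ)^n)⁻¹ • 1

/-- The single-qubit T-state vector `|T⟩ = (|0⟩ + e^{-iπ/4}|1⟩)/√2`. -/
def Tket : QIdx 1 → ℂ :=
  fun i => if i 0 = 0 then (Real.sqrt 2 : ℂ)⁻¹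
           else Complex.exp (-(Real.pi/4 : ℂ) * Complex.I) * (Real.sqrt 2 : ℂ)⁻¹

/-- The depolarized T-state `ρ_p = (1-p)|T⟩⟨T| + p·I₂/2`. -/
def rhoDep (p : ℝ) : Matrix (QIdx 1) (QIdx 1) ℂ :=
  ((1 - p : ℝ) : ℂ) • proj Tket + ((p : ℝ) : ℂ) • (((2:ℂ))⁻¹ • 1)


/-- The single-qubit pure state `|ψ⟩ = cos(π/16)|0⟩ + sin(π/16)|1⟩`. -/
def psi16 : QIdx 1 → ℂ :=
  fun i => if i 0 = 0 then (Real.cos (Real.pi/16) : ℂ) else (Real.sin (Real.pi/16) : ℂ)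

/-- The Hadamard gate `H = (σˣ + σᶻ)/√2` on one qubit. -/
def Had : Matrix (QIdx 1) (QIdx 1) ℂ :=
  ((Real.sqrt 2 : ℂ))⁻¹ •
    (pauliString (fun _ => (1 : Fin 4)) + pauliString (fun _ => (2 : Fin 4)))

namespace W2Aux

lemma qsum2 {M : Type*} [AddCommMonoid M] (f : QIdx 1 → M) :
    ∑ i, f i = f (fun _ => 0) + f (fun _ => 1) := by
  rw [← (Equiv.funUnique (Fin 1) (Fin 2)).symm.sum_comp]
  simp [Fin.sum_univ_two, Equiv.funUnique, uniqueElim]; rfl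

lemma qsum4 {M : Type*} [AddCommMonoid M] (f : (Fin 1 → Fin 4) → M) :
    ∑ i, f i = f (fun _ => 0) + f (fun _ => 1) + f (fun _ => 2) + f (fun _ => 3) := by
  rw [← (Equiv.funUnique (Fin 1) (Fin 4)).symm.sum_comp]
  simp [Fin.sum_univ_four, Equiv.funUnique, uniqueElim]; rfl

def psiR (c s : ℝ) : QIdx 1 → ℂ := fun i => if i 0 = 0 then (c:ℂ) else (s:ℂ)

def rho1 (c s : ℝ) : Matrix (QIdx 1) (QIdx 1) ℂ := proj (psiR c s)

def rho2 (c s : ℝ) : Matrix (QIdx 1) (QIdx 1) ℂ :=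
  (2:ℂ)⁻¹ • rho1 c s + (2:ℂ)⁻¹ • (Had * rho1 c s * Had)

variable (c s : ℝ)

set_option maxHeartbeats 2000000

lemma t1_0 : (rho1 c s * pauliString (fun _ => 0)).trace = ((c^2 + s^2 : ℝ) : ℂ) := by
  have h2 : Real.sqrt 2 ^ 2 = 2 := Real.sq_sqrt (by norm_num)
  have h2' : (Real.sqrt 2 : ℝ) ≠ 0 := by positivity
  simp only [rho2, rho1, Matrix.trace, Matrix.diag, Matrix.mul_apply, Matrix.add_apply,
    Matrix.smul_apply, qsum2, pauliString, Fin.prod_univ_one, pauliMat, proj,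
    Matrix.vecMulVec_apply, Pi.star_apply, psiR, Had, smul_eq_mul]
  norm_num [Matrix.one_apply, Complex.conj_ofReal, funext_iff, Fin.forall_fin_one]
  try rw [show ((Real.sqrt 2 : ℂ))⁻¹ = ((((Real.sqrt 2)⁻¹ : ℝ)) : ℂ) by push_cast; ring]
  push_cast
  have h4 : Real.sqrt 2 ^ 4 = 4 := by
    rw [show (4:ℕ) = 2*2 from rfl, pow_mul, h2]; norm_num
  rw [Complex.ext_iff]
  constructor
  all_goals simp [← Complex.ofReal_pow, ← Complex.ofReal_mul, ← Complex.ofReal_add,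
    ← Complex.ofReal_neg, ← Complex.ofReal_sub, ← Complex.ofReal_ofNat, ← Complex.ofReal_one]
  all_goals try field_simp
  all_goals try ring_nf
  all_goals try simp only [h4, h2]
  all_goals try ring
  all_goals try linarith

lemma t1_1 : (rho1 c s * pauliString (fun _ => 1)).trace = ((2*c*s : ℝ) : ℂ) := by
  have h2 : Real.sqrt 2 ^ 2 = 2 := Real.sq_sqrt (by norm_num)
  have h2' : (Real.sqrt 2 : ℝ) ≠ 0 := by positivity
  simp only [rho2, rho1, Matrix.trace, Matrix.diag, Matrix.mul_apply, Matrix.add_apply,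
    Matrix.smul_apply, qsum2, pauliString, Fin.prod_univ_one, pauliMat, proj,
    Matrix.vecMulVec_apply, Pi.star_apply, psiR, Had, smul_eq_mul]
  norm_num [Matrix.one_apply, Complex.conj_ofReal, funext_iff, Fin.forall_fin_one]
  try rw [show ((Real.sqrt 2 : ℂ))⁻¹ = ((((Real.sqrt 2)⁻¹ : ℝ)) : ℂ) by push_cast; ring]
  push_cast
  have h4 : Real.sqrt 2 ^ 4 = 4 := by
    rw [show (4:ℕ) = 2*2 from rfl, pow_mul, h2]; norm_num
  rw [Complex.ext_iff]
  constructor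
  all_goals simp [← Complex.ofReal_pow, ← Complex.ofReal_mul, ← Complex.ofReal_add,
    ← Complex.ofReal_neg, ← Complex.ofReal_sub, ← Complex.ofReal_ofNat, ← Complex.ofReal_one]
  all_goals try field_simp
  all_goals try ring_nf
  all_goals try simp only [h4, h2]
  all_goals try ring
  all_goals try linarith

lemma t1_2 : (rho1 c s * pauliString (fun _ => 2)).trace = ((c^2 - s^2 : ℝ) : ℂ) := by
  have h2 : Real.sqrt 2 ^ 2 = 2 := Real.sq_sqrt (by norm_num)
  have h2' : (Real.sqrt 2 : ℝ) ≠ 0 := by positivity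
  simp only [rho2, rho1, Matrix.trace, Matrix.diag, Matrix.mul_apply, Matrix.add_apply,
    Matrix.smul_apply, qsum2, pauliString, Fin.prod_univ_one, pauliMat, proj,
    Matrix.vecMulVec_apply, Pi.star_apply, psiR, Had, smul_eq_mul]
  norm_num [Matrix.one_apply, Complex.conj_ofReal, funext_iff, Fin.forall_fin_one]
  try rw [show ((Real.sqrt 2 : ℂ))⁻¹ = ((((Real.sqrt 2)⁻¹ : ℝ)) : ℂ) by push_cast; ring]
  push_cast
  have h4 : Real.sqrt 2 ^ 4 = 4 := by
    rw [show (4:ℕ) = 2*2 from rfl, pow_mul, h2]; norm_num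
  rw [Complex.ext_iff]
  constructor
  all_goals simp [← Complex.ofReal_pow, ← Complex.ofReal_mul, ← Complex.ofReal_add,
    ← Complex.ofReal_neg, ← Complex.ofReal_sub, ← Complex.ofReal_ofNat, ← Complex.ofReal_one]
  all_goals try field_simp
  all_goals try ring_nf
  all_goals try simp only [h4, h2]
  all_goals try ring
  all_goals try linarith

lemma t1_3 : (rho1 c s * pauliString (fun _ => 3)).trace = ((0 : ℝ) : ℂ) := by
  have h2 : Real.sqrt 2 ^ 2 = 2 := Real.sq_sqrt (by norm_num)
  have h2' : (Real.sqrt 2 : ℝ) ≠ 0 := by positivity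
  simp only [rho2, rho1, Matrix.trace, Matrix.diag, Matrix.mul_apply, Matrix.add_apply,
    Matrix.smul_apply, qsum2, pauliString, Fin.prod_univ_one, pauliMat, proj,
    Matrix.vecMulVec_apply, Pi.star_apply, psiR, Had, smul_eq_mul]
  norm_num [Matrix.one_apply, Complex.conj_ofReal, funext_iff, Fin.forall_fin_one]
  try rw [show ((Real.sqrt 2 : ℂ))⁻¹ = ((((Real.sqrt 2)⁻¹ : ℝ)) : ℂ) by push_cast; ring]
  push_cast
  have h4 : Real.sqrt 2 ^ 4 = 4 := by
    rw [show (4:ℕ) = 2*2 from rfl, pow_mul, h2]; norm_num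
  rw [Complex.ext_iff]
  constructor
  all_goals simp [← Complex.ofReal_pow, ← Complex.ofReal_mul, ← Complex.ofReal_add,
    ← Complex.ofReal_neg, ← Complex.ofReal_sub, ← Complex.ofReal_ofNat, ← Complex.ofReal_one]
  all_goals try field_simp
  all_goals try ring_nf
  all_goals try simp only [h4, h2]
  all_goals try ring
  all_goals try linarith

lemma p1 : (rho1 c s * rho1 c s).trace = (((c^2 + s^2)^2 : ℝ) : ℂ) := by
  have h2 : Real.sqrt 2 ^ 2 = 2 := Real.sq_sqrt (by norm_num)
  have h2' : (Real.sqrt 2 : ℝ) ≠ 0 := by positivity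
  simp only [rho2, rho1, Matrix.trace, Matrix.diag, Matrix.mul_apply, Matrix.add_apply,
    Matrix.smul_apply, qsum2, pauliString, Fin.prod_univ_one, pauliMat, proj,
    Matrix.vecMulVec_apply, Pi.star_apply, psiR, Had, smul_eq_mul]
  norm_num [Matrix.one_apply, Complex.conj_ofReal, funext_iff, Fin.forall_fin_one]
  try rw [show ((Real.sqrt 2 : ℂ))⁻¹ = ((((Real.sqrt 2)⁻¹ : ℝ)) : ℂ) by push_cast; ring]
  push_cast
  have h4 : Real.sqrt 2 ^ 4 = 4 := by
    rw [show (4:ℕ) = 2*2 from rfl, pow_mul, h2]; norm_num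
  rw [Complex.ext_iff]
  constructor
  all_goals simp [← Complex.ofReal_pow, ← Complex.ofReal_mul, ← Complex.ofReal_add,
    ← Complex.ofReal_neg, ← Complex.ofReal_sub, ← Complex.ofReal_ofNat, ← Complex.ofReal_one]
  all_goals try field_simp
  all_goals try ring_nf
  all_goals try simp only [h4, h2]
  all_goals try ring
  all_goals try linarith

lemma t2_0 : (rho2 c s * pauliString (fun _ => 0)).trace = ((c^2 + s^2 : ℝ) : ℂ) := by
  have h2 : Real.sqrt 2 ^ 2 = 2 := Real.sq_sqrt (by norm_num)
  have h2' : (Real.sqrt 2 : ℝ) ≠ 0 := by positivity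
  simp only [rho2, rho1, Matrix.trace, Matrix.diag, Matrix.mul_apply, Matrix.add_apply,
    Matrix.smul_apply, qsum2, pauliString, Fin.prod_univ_one, pauliMat, proj,
    Matrix.vecMulVec_apply, Pi.star_apply, psiR, Had, smul_eq_mul]
  norm_num [Matrix.one_apply, Complex.conj_ofReal, funext_iff, Fin.forall_fin_one]
  try rw [show ((Real.sqrt 2 : ℂ))⁻¹ = ((((Real.sqrt 2)⁻¹ : ℝ)) : ℂ) by push_cast; ring]
  push_cast
  have h4 : Real.sqrt 2 ^ 4 = 4 := by
    rw [show (4:ℕ) = 2*2 from rfl, pow_mul, h2]; norm_num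
  rw [Complex.ext_iff]
  constructor
  all_goals simp [← Complex.ofReal_pow, ← Complex.ofReal_mul, ← Complex.ofReal_add,
    ← Complex.ofReal_neg, ← Complex.ofReal_sub, ← Complex.ofReal_ofNat, ← Complex.ofReal_one]
  all_goals try field_simp
  all_goals try ring_nf
  all_goals try simp only [h4, h2]
  all_goals try ring
  all_goals try linarith

lemma t2_1 : (rho2 c s * pauliString (fun _ => 1)).trace = (((2*c*s + (c^2 - s^2))/2 : ℝ) : ℂ) := by
  have h2 : Real.sqrt 2 ^ 2 = 2 := Real.sq_sqrt (by norm_num)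
  have h2' : (Real.sqrt 2 : ℝ) ≠ 0 := by positivity
  simp only [rho2, rho1, Matrix.trace, Matrix.diag, Matrix.mul_apply, Matrix.add_apply,
    Matrix.smul_apply, qsum2, pauliString, Fin.prod_univ_one, pauliMat, proj,
    Matrix.vecMulVec_apply, Pi.star_apply, psiR, Had, smul_eq_mul]
  norm_num [Matrix.one_apply, Complex.conj_ofReal, funext_iff, Fin.forall_fin_one]
  try rw [show ((Real.sqrt 2 : ℂ))⁻¹ = ((((Real.sqrt 2)⁻¹ : ℝ)) : ℂ) by push_cast; ring]
  push_cast
  have h4 : Real.sqrt 2 ^ 4 = 4 := by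
    rw [show (4:ℕ) = 2*2 from rfl, pow_mul, h2]; norm_num
  rw [Complex.ext_iff]
  constructor
  all_goals simp [← Complex.ofReal_pow, ← Complex.ofReal_mul, ← Complex.ofReal_add,
    ← Complex.ofReal_neg, ← Complex.ofReal_sub, ← Complex.ofReal_ofNat, ← Complex.ofReal_one]
  all_goals try field_simp
  all_goals try ring_nf
  all_goals try simp only [h4, h2]
  all_goals try ring
  all_goals try linarith

lemma t2_2 : (rho2 c s * pauliString (fun _ => 2)).trace = (((2*c*s + (c^2 - s^2))/2 : ℝ) : ℂ) := by
  have h2 : Real.sqrt 2 ^ 2 = 2 := Real.sq_sqrt (by norm_num)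
  have h2' : (Real.sqrt 2 : ℝ) ≠ 0 := by positivity
  simp only [rho2, rho1, Matrix.trace, Matrix.diag, Matrix.mul_apply, Matrix.add_apply,
    Matrix.smul_apply, qsum2, pauliString, Fin.prod_univ_one, pauliMat, proj,
    Matrix.vecMulVec_apply, Pi.star_apply, psiR, Had, smul_eq_mul]
  norm_num [Matrix.one_apply, Complex.conj_ofReal, funext_iff, Fin.forall_fin_one]
  try rw [show ((Real.sqrt 2 : ℂ))⁻¹ = ((((Real.sqrt 2)⁻¹ : ℝ)) : ℂ) by push_cast; ring]
  push_cast
  have h4 : Real.sqrt 2 ^ 4 = 4 := by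
    rw [show (4:ℕ) = 2*2 from rfl, pow_mul, h2]; norm_num
  rw [Complex.ext_iff]
  constructor
  all_goals simp [← Complex.ofReal_pow, ← Complex.ofReal_mul, ← Complex.ofReal_add,
    ← Complex.ofReal_neg, ← Complex.ofReal_sub, ← Complex.ofReal_ofNat, ← Complex.ofReal_one]
  all_goals try field_simp
  all_goals try ring_nf
  all_goals try simp only [h4, h2]
  all_goals try ring
  all_goals try linarith

lemma t2_3 : (rho2 c s * pauliString (fun _ => 3)).trace = ((0 : ℝ) : ℂ) := by
  have h2 : Real.sqrt 2 ^ 2 = 2 := Real.sq_sqrt (by norm_num)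
  have h2' : (Real.sqrt 2 : ℝ) ≠ 0 := by positivity
  simp only [rho2, rho1, Matrix.trace, Matrix.diag, Matrix.mul_apply, Matrix.add_apply,
    Matrix.smul_apply, qsum2, pauliString, Fin.prod_univ_one, pauliMat, proj,
    Matrix.vecMulVec_apply, Pi.star_apply, psiR, Had, smul_eq_mul]
  norm_num [Matrix.one_apply, Complex.conj_ofReal, funext_iff, Fin.forall_fin_one]
  try rw [show ((Real.sqrt 2 : ℂ))⁻¹ = ((((Real.sqrt 2)⁻¹ : ℝ)) : ℂ) by push_cast; ring]
  push_cast
  have h4 : Real.sqrt 2 ^ 4 = 4 := by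
    rw [show (4:ℕ) = 2*2 from rfl, pow_mul, h2]; norm_num
  rw [Complex.ext_iff]
  constructor
  all_goals simp [← Complex.ofReal_pow, ← Complex.ofReal_mul, ← Complex.ofReal_add,
    ← Complex.ofReal_neg, ← Complex.ofReal_sub, ← Complex.ofReal_ofNat, ← Complex.ofReal_one]
  all_goals try field_simp
  all_goals try ring_nf
  all_goals try simp only [h4, h2]
  all_goals try ring
  all_goals try linarith

lemma p2 : (rho2 c s * rho2 c s).trace = (((2*(c^2 + s^2)^2 + (2*c*s + (c^2 - s^2))^2)/4 : ℝ) : ℂ) := by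
  have h2 : Real.sqrt 2 ^ 2 = 2 := Real.sq_sqrt (by norm_num)
  have h2' : (Real.sqrt 2 : ℝ) ≠ 0 := by positivity
  simp only [rho2, rho1, Matrix.trace, Matrix.diag, Matrix.mul_apply, Matrix.add_apply,
    Matrix.smul_apply, qsum2, pauliString, Fin.prod_univ_one, pauliMat, proj,
    Matrix.vecMulVec_apply, Pi.star_apply, psiR, Had, smul_eq_mul]
  norm_num [Matrix.one_apply, Complex.conj_ofReal, funext_iff, Fin.forall_fin_one]
  try rw [show ((Real.sqrt 2 : ℂ))⁻¹ = ((((Real.sqrt 2)⁻¹ : ℝ)) : ℂ) by push_cast; ring]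
  push_cast
  have h4 : Real.sqrt 2 ^ 4 = 4 := by
    rw [show (4:ℕ) = 2*2 from rfl, pow_mul, h2]; norm_num
  rw [Complex.ext_iff]
  constructor
  all_goals simp [← Complex.ofReal_pow, ← Complex.ofReal_mul, ← Complex.ofReal_add,
    ← Complex.ofReal_neg, ← Complex.ofReal_sub, ← Complex.ofReal_ofNat, ← Complex.ofReal_one]
  all_goals try field_simp
  all_goals try ring_nf
  all_goals try simp only [h4, h2]
  all_goals try ring
  all_goals try linarith

end W2Aux
set_option maxHeartbeats 2000000 in
/-- `W₂` is not a magic monotone: it strictly increases under the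
mixed unital Clifford channel `Γ(ρ) = ρ/2 + HρH/2` applied to
`|ψ⟩ = cos(π/16)|0⟩ + sin(π/16)|1⟩`. -/
theorem W2_not_monotone :
    Wit 2 ((2:ℂ)⁻¹ • proj psi16 + (2:ℂ)⁻¹ • (Had * proj psi16 * Had)) >
      Wit 2 (proj psi16) := by
  set c : ℝ := Real.cos (Real.pi/16) with hcdef
  set s : ℝ := Real.sin (Real.pi/16) with hsdef
  have hpsi : proj psi16 = W2Aux.rho1 c s := rfl
  have hrho2 : (2:ℂ)⁻¹ • proj psi16 + (2:ℂ)⁻¹ • (Had * proj psi16 * Had)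
      = W2Aux.rho2 c s := rfl
  set X : ℝ := Real.sin (Real.pi/8) with hXdef
  set Z : ℝ := Real.cos (Real.pi/8) with hZdef
  have hc : c^2 + s^2 = 1 := Real.cos_sq_add_sin_sq _
  have hX : 2*c*s = X := by
    have h := Real.sin_two_mul (Real.pi/16)
    rw [show (2:ℝ)*(Real.pi/16) = Real.pi/8 by ring] at h
    rw [hXdef, h, hcdef, hsdef]; ring
  have hZ : c^2 - s^2 = Z := by
    have h := Real.cos_two_mul (Real.pi/16)
    rw [show (2:ℝ)*(Real.pi/16) = Real.pi/8 by ring] at h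
    rw [hZdef, h, hcdef]; nlinarith [hc]
  have hs2 : X^2 + Z^2 = 1 := Real.sin_sq_add_cos_sq _
  have h2 : Real.sqrt 2 ^ 2 = 2 := Real.sq_sqrt (by norm_num)
  have h2nn : (0:ℝ) ≤ Real.sqrt 2 := Real.sqrt_nonneg 2
  have hXZ : X*Z = Real.sqrt 2/4 := by
    have h := Real.sin_two_mul (Real.pi/8)
    rw [show (2:ℝ)*(Real.pi/8) = Real.pi/4 by ring, Real.sin_pi_div_four] at h
    rw [hXdef, hZdef]; linear_combination (-1/2 : ℝ) * h
  have hXZ2 : X^2 * Z^2 = 1/8 := by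
    rw [show X^2*Z^2 = (X*Z)^2 by ring, hXZ, div_pow, h2]; norm_num
  have hw2 : (X+Z)^2 = (2 + Real.sqrt 2)/2 := by
    linear_combination hs2 + 2*hXZ
  have h44 : (2*(2:ℝ)) = ((4:ℕ):ℝ) := by norm_num
  have heven : Even 4 := ⟨2, rfl⟩
  -- Amom values
  have A1 : Amom 2 (proj psi16) = 7/8 := by
    rw [hpsi]
    simp only [Amom]
    rw [W2Aux.qsum4 (fun a => ‖(W2Aux.rho1 c s * pauliString a).trace‖ ^ (2*(2:ℝ)))]
    rw [W2Aux.t1_0, W2Aux.t1_1, W2Aux.t1_2, W2Aux.t1_3, hc, hX, hZ]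
    simp only [Complex.norm_real, Real.norm_eq_abs, h44, Real.rpow_natCast, heven.pow_abs]
    have : X^4 + Z^4 = 3/4 := by linear_combination (X^2+Z^2+1)*hs2 - 2*hXZ2
    rw [show ((2:ℝ)^(1:ℕ)) = 2 by norm_num]
    norm_num
    try linarith [this]
  have A2 : Amom 2 ((2:ℂ)⁻¹ • proj psi16 + (2:ℂ)⁻¹ • (Had * proj psi16 * Had))
      = (19 + 2*Real.sqrt 2)/32 := by
    rw [hrho2]
    simp only [Amom]
    rw [W2Aux.qsum4 (fun a => ‖(W2Aux.rho2 c s * pauliString a).trace‖ ^ (2*(2:ℝ)))]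
    rw [W2Aux.t2_0, W2Aux.t2_1, W2Aux.t2_2, W2Aux.t2_3, hc, hX, hZ]
    simp only [Complex.norm_real, Real.norm_eq_abs, h44, Real.rpow_natCast, heven.pow_abs]
    rw [show ((2:ℝ)^(1:ℕ)) = 2 by norm_num]
    have h4 : ((X+Z)/2)^4 = (3 + 2*Real.sqrt 2)/32 := by
      rw [show ((X+Z)/2)^4 = ((X+Z)^2)^2/16 by ring, hw2]
      field_simp
      linarith [h2]
    norm_num
    try linarith [h4]
  -- purity values
  have T1 : ((proj psi16 * proj psi16).trace.re) = 1 := by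
    rw [hpsi, W2Aux.p1, Complex.ofReal_re, hc]; norm_num
  have T2 : ((((2:ℂ)⁻¹ • proj psi16 + (2:ℂ)⁻¹ • (Had * proj psi16 * Had)) *
      ((2:ℂ)⁻¹ • proj psi16 + (2:ℂ)⁻¹ • (Had * proj psi16 * Had))).trace.re)
      = (6 + Real.sqrt 2)/8 := by
    rw [hrho2, W2Aux.p2, Complex.ofReal_re, hc, hX, hZ]
    linear_combination (1/4 : ℝ)*hw2
  -- final numeric inequality
  have hApos : (0:ℝ) < (19 + 2*Real.sqrt 2)/32 := by positivity
  have hTpos : (0:ℝ) < (6 + Real.sqrt 2)/8 := by positivity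
  have h3 : Real.sqrt 2 ^ 3 = 2 * Real.sqrt 2 := by
    rw [pow_succ, h2]
  have key : Real.log ((19 + 2*Real.sqrt 2)/32)
      < Real.log ((7/8) * ((6 + Real.sqrt 2)/8)^3) := by
    apply Real.log_lt_log hApos
    rw [div_pow]
    rw [show ((6:ℝ) + Real.sqrt 2)^3 = 252 + 110*Real.sqrt 2 by
      ring_nf; rw [h3]; nlinarith [h2]]
    nlinarith [h2, h2nn, sq_nonneg (Real.sqrt 2 - 1.5), sq_nonneg (Real.sqrt 2 - 1.4)]
  rw [Real.log_mul (by norm_num) (by positivity), Real.log_pow] at key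
  simp only [Wit, S2, A1, A2, T1, T2]
  rw [Real.log_one]
  push_cast at key
  norm_num
  linarith [key]

end
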